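/- Let n ∈ ℕ and let r ∈ P(2,2) be the partition whose blocks are {the two upper points} and {the two lower points}. Let A be a unital C*-algebra and let u_{ij} ∈ A (1 ≤ i,j ≤ n) be self-adjoint elements which fulfill the relations R(r), R(p₀) for some p₀ ∈ P(0,l) (l ≥ 1), and R(q₀) for some q₀ ∈ P(k,0) (k ≥ 1). Then Σ_{a=1}^n u_{ia}u_{ja} = δ_{ij}·1 and Σ_{a=1}^n u_{ai}u_{aj} = δ_{ij}·1 for all 1 ≤ i,j ≤ n (i.e., uuᵗ = uᵗu = 1 in M_n(A)). -/

import Mathlib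

open scoped BigOperators

/-- A partition with `k` upper and `l` lower points, encoded as an equivalence
relation on the disjoint union of the points; the blocks of the partition are
the equivalence classes. -/
abbrev PointPartition (k l : ℕ) := Setoid (Fin k ⊕ Fin l)

namespace Partition

/-- `DeltaCond p α β` holds iff `δ_p(α,β) = 1`, i.e. the labelling of the upper
points by `α` and of the lower points by `β` is constant on every block of `p`. -/
def DeltaCond {k l n : ℕ} (p : PointPartition k l) (α : Fin k → Fin n) (β : Fin l → Fin n) : Prop :=
  ∀ x y : Fin k ⊕ Fin l, p.r x y → Sum.elim α β x = Sum.elim α β y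

/-- The ordered product `u_{γ₁α₁} ⋯ u_{γ_mα_m}`. -/
def uProd {m n : ℕ} {A : Type*} [Monoid A] (u : Fin n → Fin n → A) (γ α : Fin m → Fin n) : A :=
  (List.ofFn fun i : Fin m => u (γ i) (α i)).prod

open Classical in
/-- The elements `u i j` fulfill the relations `R(p)` associated to the partition `p`. -/
def FulfillsR {k l n : ℕ} {A : Type*} [Ring A] (p : PointPartition k l) (u : Fin n → Fin n → A) :
    Prop :=
  ∀ (α : Fin k → Fin n) (β : Fin l → Fin n),
    (∑ γ : Fin k → Fin n, if DeltaCond p γ β then uProd u γ α else 0)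
      = ∑ γ' : Fin l → Fin n, if DeltaCond p α γ' then uProd u β γ' else 0

end Partition

/-- The partition `r ∈ P(2,2)` whose blocks are the two upper points and the two lower
points. -/
def pairOverPair : PointPartition 2 2 :=
  Setoid.ker (Sum.isLeft : Fin 2 ⊕ Fin 2 → Bool)


open Partition in
private lemma uProd_zero {n : ℕ} {A : Type*} [Monoid A] (u : Fin n → Fin n → A)
    (β γ : Fin 0 → Fin n) : uProd u β γ = 1 := by
  simp [uProd]

open Partition in
private lemma uProd_succ {m n : ℕ} {A : Type*} [Monoid A] (u : Fin n → Fin n → A)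
    (β γ : Fin (m + 1) → Fin n) :
    uProd u β γ = uProd u (fun i => β i.castSucc) (fun i => γ i.castSucc)
      * u (β (Fin.last m)) (γ (Fin.last m)) := by
  simp only [uProd, List.ofFn_succ', List.prod_concat]

open Partition in
private lemma uProd_two {n : ℕ} {A : Type*} [Monoid A] (u : Fin n → Fin n → A)
    (γ α : Fin 2 → Fin n) : uProd u γ α = u (γ 0) (α 0) * u (γ 1) (α 1) := by
  simp [uProd, List.ofFn_succ]

open Partition in
private lemma deltaPair {n : ℕ} (γ β : Fin 2 → Fin n) :
    DeltaCond pairOverPair γ β ↔ (γ 0 = γ 1 ∧ β 0 = β 1) := by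
  constructor
  · intro h
    exact ⟨h (.inl 0) (.inl 1) rfl, h (.inr 0) (.inr 1) rfl⟩
  · rintro ⟨h1, h2⟩ p q hpq
    rcases p with p | p <;> rcases q with q | q
    · fin_cases p <;> fin_cases q <;> simp_all
    · exact absurd hpq (by
        intro h
        have h' : Sum.isLeft (Sum.inl p : Fin 2 ⊕ Fin 2) = Sum.isLeft (Sum.inr q : Fin 2 ⊕ Fin 2) := h
        simp at h')
    · exact absurd hpq (by
        intro h
        have h' : Sum.isLeft (Sum.inr p : Fin 2 ⊕ Fin 2) = Sum.isLeft (Sum.inl q : Fin 2 ⊕ Fin 2) := h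
        simp at h')
    · fin_cases p <;> fin_cases q <;> simp_all

open Partition in
private lemma pairRel {n : ℕ} {A : Type*} [Ring A] (u : Fin n → Fin n → A)
    (hr : FulfillsR pairOverPair u) (a b c d : Fin n) :
    (if a = b then (∑ e, u e c * u e d) else 0)
      = (if c = d then (∑ e, u a e * u b e) else 0) := by
  classical
  have h := hr ![c, d] ![a, b]
  rw [← Equiv.sum_comp (finTwoArrowEquiv (Fin n)).symm
        (fun γ => if DeltaCond pairOverPair γ ![a, b] then uProd u γ ![c, d] else 0),
      ← Equiv.sum_comp (finTwoArrowEquiv (Fin n)).symm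
        (fun γ' => if DeltaCond pairOverPair ![c, d] γ' then uProd u ![a, b] γ' else 0)] at h
  simp only [finTwoArrowEquiv_symm_apply, deltaPair, uProd_two, Matrix.cons_val_zero,
    Matrix.cons_val_one, Matrix.head_cons, Fintype.sum_prod_type] at h
  by_cases hab : a = b <;> by_cases hcd : c = d <;>
    simp_all [Finset.sum_ite_eq]

open Partition in
private lemma contraction {n : ℕ} {A : Type*} [Ring A] [StarRing A] (u : Fin n → Fin n → A)
    (x : A) (hsa : ∀ i j, star (u i j) = u i j)
    (hQ : ∀ c d : Fin n, (∑ e, u e c * u e d) = if c = d then x else 0)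
    (hcomm : ∀ a b, Commute x (u a b)) :
    ∀ (m : ℕ) (γ δ : Fin m → Fin n),
      (∑ β : Fin m → Fin n, uProd u β γ * star (uProd u β δ))
        = if γ = δ then x ^ m else 0 := by
  classical
  intro m
  induction m with
  | zero =>
    intro γ δ
    rw [if_pos (Subsingleton.elim γ δ)]
    haveI : Unique (Fin 0 → Fin n) := ⟨⟨fun i => i.elim0⟩, fun f => funext fun i => i.elim0⟩
    rw [Fintype.sum_unique]
    simp [uProd_zero]
  | succ m ih =>
    intro γ δ
    have hcP : ∀ (β' σ : Fin m → Fin n), Commute x (uProd u β' σ) := by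
      intro β' σ
      apply Commute.list_prod_right
      intro y hy
      obtain ⟨i, rfl⟩ := List.mem_ofFn.mp hy
      exact hcomm _ _
    rw [← Equiv.sum_comp (Fin.snocEquiv (fun _ => Fin n))
        (fun β => uProd u β γ * star (uProd u β δ)), Fintype.sum_prod_type]
    have step : ∀ (b : Fin n) (β' : Fin m → Fin n),
        ((fun β => uProd u β γ * star (uProd u β δ)) (Fin.snocEquiv (fun _ => Fin n) (b, β')))
        = uProd u β' (fun i => γ i.castSucc) *
            ((u b (γ (Fin.last m)) * u b (δ (Fin.last m))) *
              star (uProd u β' (fun i => δ i.castSucc))) := by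
      intro b β'
      have hsnoc : ((Fin.snocEquiv fun _ => Fin n) (b, β')) = Fin.snoc β' b := rfl
      rw [hsnoc]
      dsimp only
      rw [uProd_succ, uProd_succ]
      simp only [Fin.snoc_castSucc, Fin.snoc_last, star_mul, hsa]
      simp [mul_assoc]
    simp only [step]
    rw [Finset.sum_comm]
    have inner : ∀ β' : Fin m → Fin n,
        (∑ b : Fin n, uProd u β' (fun i => γ i.castSucc) *
          ((u b (γ (Fin.last m)) * u b (δ (Fin.last m))) *
            star (uProd u β' (fun i => δ i.castSucc))))
        = uProd u β' (fun i => γ i.castSucc) *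
            (((if γ (Fin.last m) = δ (Fin.last m) then x else 0)) *
              star (uProd u β' (fun i => δ i.castSucc))) := by
      intro β'
      rw [← Finset.mul_sum, ← Finset.sum_mul, hQ]
    simp only [inner]
    by_cases hlast : γ (Fin.last m) = δ (Fin.last m)
    · simp only [if_pos hlast]
      have : ∀ β' : Fin m → Fin n,
          uProd u β' (fun i => γ i.castSucc) * (x * star (uProd u β' (fun i => δ i.castSucc)))
          = x * (uProd u β' (fun i => γ i.castSucc) * star (uProd u β' (fun i => δ i.castSucc))) := by
        intro β'
        rw [← mul_assoc, ← (hcP β' _).eq, mul_assoc]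
      simp only [this]
      rw [← Finset.mul_sum, ih]
      by_cases hrest : (fun i : Fin m => γ i.castSucc) = (fun i : Fin m => δ i.castSucc)
      · have hγδ : γ = δ := by
          funext p
          refine Fin.lastCases hlast (fun i => ?_) p
          exact congrFun hrest i
        rw [if_pos hrest, if_pos hγδ, pow_succ']
      · rw [if_neg hrest, mul_zero, if_neg]
        intro h
        exact hrest (funext fun i => congrFun h _)
    · simp only [if_neg hlast, zero_mul, mul_zero, Finset.sum_const_zero]
      rw [if_neg]
      intro h
      exact hlast (congrFun h _)

open Partition

/-- **The pair-over-pair partition enforces orthogonality.** If the self-adjoint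
elements `u i j` of a unital C*-algebra fulfill `R(r)` for the partition `r ∈ P(2,2)`
with blocks {upper points} and {lower points}, as well as `R(p₀)` for some
`p₀ ∈ P(0,l)` (`l ≥ 1`) and `R(q₀)` for some `q₀ ∈ P(k,0)` (`k ≥ 1`), then the matrix
`u` is orthogonal: `u uᵗ = uᵗ u = 1`. -/
theorem pairOverPair_enforces_orthogonality {n k l : ℕ} (hl : 1 ≤ l) (hk : 1 ≤ k)
    {A : Type*} [CStarAlgebra A] (u : Fin n → Fin n → A)
    (hsa : ∀ i j, star (u i j) = u i j)
    (hr : Partition.FulfillsR pairOverPair u)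
    (p₀ : PointPartition 0 l) (hp₀ : Partition.FulfillsR p₀ u)
    (q₀ : PointPartition k 0) (hq₀ : Partition.FulfillsR q₀ u) :
    ∀ i j : Fin n,
      (∑ a : Fin n, u i a * u j a) = (if i = j then 1 else 0)
      ∧ (∑ a : Fin n, u a i * u a j) = (if i = j then 1 else 0) := by
  intro i j
  classical
  letI : PartialOrder A := CStarAlgebra.spectralOrder A
  haveI : StarOrderedRing A := CStarAlgebra.spectralOrderedRing A
  have E := pairRel u hr
  have hQ : ∀ c d : Fin n,
      (∑ e, u e c * u e d) = if c = d then (∑ e, u i e * u i e) else 0 := by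
    intro c d
    simpa using E i i c d
  have hP : ∀ a b : Fin n,
      (∑ e, u a e * u b e) = if a = b then (∑ e, u i e * u i e) else 0 := by
    intro a b
    simpa [hQ i i] using (E a b i i).symm
  set x : A := ∑ e, u i e * u i e with hxdef
  have hx0 : 0 ≤ x := by
    rw [hxdef]
    refine Finset.sum_nonneg fun e _ => ?_
    have := star_mul_self_nonneg (u i e)
    rwa [hsa] at this
  have hcomm : ∀ a b : Fin n, Commute x (u a b) := by
    intro a b
    show x * u a b = u a b * x
    have h1 : ∑ e, (∑ d, u a d * u e d) * u e b = x * u a b := by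
      simp only [hP, ite_mul, zero_mul]
      simp
    have h2 : ∑ d, u a d * (∑ e, u e d * u e b) = u a b * x := by
      simp only [hQ, mul_ite, mul_zero]
      simp
    have h3 : ∑ e, (∑ d, u a d * u e d) * u e b = ∑ d, u a d * (∑ e, u e d * u e b) := by
      simp only [Finset.sum_mul, Finset.mul_sum, mul_assoc]
      rw [Finset.sum_comm]
    rw [← h1, h3, h2]
  have hcontr := contraction u x hsa hQ hcomm
  -- the relations coming from p₀
  set α0 : Fin 0 → Fin n := fun p => p.elim0 with hα0
  set D : (Fin l → Fin n) → Prop := fun β => DeltaCond p₀ α0 β with hDdef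
  set S : Finset (Fin l → Fin n) := Finset.univ.filter D with hSdef
  have hfune : ∀ f g : Fin 0 → Fin n, f = g := fun f g => funext fun p => p.elim0
  have hT : ∀ β : Fin l → Fin n, (∑ γ' ∈ S, uProd u β γ') = if D β then 1 else 0 := by
    intro β
    have h := hp₀ α0 β
    haveI : Unique (Fin 0 → Fin n) := ⟨⟨α0⟩, fun f => hfune f α0⟩
    rw [Fintype.sum_unique, hfune default α0, uProd_zero] at h
    rw [hSdef, Finset.sum_filter]
    exact h.symm
  have hmem : (fun _ : Fin l => i) ∈ S := by
    rw [hSdef, Finset.mem_filter]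
    refine ⟨Finset.mem_univ _, ?_⟩
    intro p q hpq
    rcases p with p | p
    · exact p.elim0
    rcases q with q | q
    · exact q.elim0
    · rfl
  have hN : S.card ≠ 0 := Finset.card_ne_zero_of_mem hmem
  have way1 : ∑ β : Fin l → Fin n, (∑ γ' ∈ S, uProd u β γ') * star (∑ γ' ∈ S, uProd u β γ')
      = (S.card : A) := by
    have h1 : ∀ β : Fin l → Fin n,
        (∑ γ' ∈ S, uProd u β γ') * star (∑ γ' ∈ S, uProd u β γ')
          = if D β then (1 : A) else 0 := by
      intro β
      rw [hT β]
      by_cases h : D β <;> simp [h]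
    rw [Finset.sum_congr rfl fun β _ => h1 β, Finset.sum_boole, hSdef]
  have way2 : ∑ β : Fin l → Fin n, (∑ γ' ∈ S, uProd u β γ') * star (∑ γ' ∈ S, uProd u β γ')
      = (S.card : A) * x ^ l := by
    have expand : ∀ β : Fin l → Fin n,
        (∑ γ' ∈ S, uProd u β γ') * star (∑ γ' ∈ S, uProd u β γ')
          = ∑ γ' ∈ S, ∑ δ ∈ S, uProd u β γ' * star (uProd u β δ) := by
      intro β
      rw [star_sum, Finset.sum_mul_sum]
    rw [Finset.sum_congr rfl fun β _ => expand β, Finset.sum_comm]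
    have inner : ∀ γ' ∈ S, (∑ β : Fin l → Fin n, ∑ δ ∈ S, uProd u β γ' * star (uProd u β δ))
        = x ^ l := by
      intro γ' hγ'
      rw [Finset.sum_comm]
      have h2 : ∀ δ ∈ S, (∑ β : Fin l → Fin n, uProd u β γ' * star (uProd u β δ))
          = if γ' = δ then x ^ l else 0 := fun δ _ => hcontr l γ' δ
      rw [Finset.sum_congr rfl h2, Finset.sum_ite_eq S γ' (fun _ => x ^ l), if_pos hγ']
    rw [Finset.sum_congr rfl inner, Finset.sum_const, nsmul_eq_mul]
  have hxl : x ^ l = 1 := by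
    have h := way2.symm.trans way1
    have h' : (S.card : ℂ) • (x ^ l) = (S.card : ℂ) • (1 : A) := by
      rw [Nat.cast_smul_eq_nsmul, Nat.cast_smul_eq_nsmul]
      simpa [nsmul_eq_mul] using h
    have h'' := congrArg (fun z => ((S.card : ℂ))⁻¹ • z) h'
    simpa [inv_smul_smul₀ (show (S.card : ℂ) ≠ 0 from Nat.cast_ne_zero.mpr hN)] using h''
  have hx1 : x = 1 := by
    have hl' : (0 : ℝ) < (l : ℝ) := by exact_mod_cast hl
    have h1 : x ^ ((l : ℝ)) = 1 := by rw [CFC.rpow_natCast x l hx0, hxl]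
    have h2 : (x ^ ((l : ℝ))) ^ ((l : ℝ))⁻¹ = x ^ ((l : ℝ) * (l : ℝ)⁻¹) :=
      CFC.rpow_rpow_of_exponent_nonneg x _ _ (le_of_lt hl') (by positivity) hx0
    rw [h1, mul_inv_cancel₀ (ne_of_gt hl'), CFC.rpow_one x hx0] at h2
    rw [← h2, CFC.one_rpow]
  exact ⟨by rw [hP i j, hx1], by rw [hQ i j, hx1]⟩
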